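/- Let k ≥ 3 be an odd integer and let D be a k-quasi-transitive digraph with a unique initial strong component C. If v is a vertex of C satisfying Δ⁺_C ≥ d⁺(v) > Δ⁺_C − (k−1)/2 (out-degrees taken in C), then v is a (k+1)-king of D. -/

import Mathlib

variable {V : Type*}

/-- A directed path of length `n` from `u` to `v` in the digraph with arc relation `A`:
a sequence of `n + 1` pairwise distinct vertices, consecutive ones joined by arcs. -/
def HasPathN (A : V → V → Prop) (u v : V) (n : ℕ) : Prop :=
  ∃ f : Fin (n + 1) → V, Function.Injective f ∧ f 0 = u ∧ f (Fin.last n) = v ∧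
    ∀ i : Fin n, A (f i.castSucc) (f i.succ)

/-- The distance from `u` to `v`: the length of a shortest directed path from `u` to `v`,
`⊤` if there is no such path. -/
noncomputable def ddist (A : V → V → Prop) (u v : V) : ℕ∞ :=
  sInf {n : ℕ∞ | ∃ m : ℕ, n = (m : ℕ∞) ∧ HasPathN A u v m}

/-- `D` is `k`-quasi-transitive if for every directed path `(v_0, …, v_k)` of length `k`,
either `(v_0, v_k)` or `(v_k, v_0)` is an arc. -/
def KQuasiTrans (A : V → V → Prop) (k : ℕ) : Prop :=
  ∀ u v : V, HasPathN A u v k → A u v ∨ A v u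

/-- A vertex `v` is an `r`-king if every vertex is within distance `r` from `v`. -/
def IsRKing (A : V → V → Prop) (r : ℕ) (v : V) : Prop :=
  ∀ u : V, ddist A v u ≤ (r : ℕ∞)

/-- `u` reaches `v` by a directed path. -/
def Reaches (A : V → V → Prop) (u v : V) : Prop :=
  ∃ n : ℕ, HasPathN A u v n

/-- A strong component: the set of all vertices mutually reachable with some vertex. -/
def IsStrongComponent (A : V → V → Prop) (S : Set V) : Prop :=
  ∃ v : V, S = {u | Reaches A u v ∧ Reaches A v u}

/-- An initial strong component: a strong component receiving no arcs from outside. -/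
def IsInitialStrongComponent (A : V → V → Prop) (S : Set V) : Prop :=
  IsStrongComponent A S ∧ ∀ u v : V, u ∉ S → v ∈ S → ¬ A u v

/-- The out-degree of `v` in `D`. -/
noncomputable def outDeg (A : V → V → Prop) (v : V) : ℕ :=
  {u : V | A v u}.ncard

/-- The out-degree of `v` in the subdigraph of `D` induced by `C`. -/
noncomputable def outDegIn (A : V → V → Prop) (C : Set V) (v : V) : ℕ :=
  {u ∈ C | A v u}.ncard

/-- The maximum out-degree of the subdigraph induced by `C`. -/
noncomputable def maxOutDegIn (A : V → V → Prop) (C : Set V) : ℕ :=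
  sSup (outDegIn A C '' C)

/-- ℕ-indexed version of a path. -/
def PathFun (A : V → V → Prop) (u v : V) (n : ℕ) (f : ℕ → V) : Prop :=
  (∀ i ≤ n, ∀ j ≤ n, f i = f j → i = j) ∧ f 0 = u ∧ f n = v ∧ ∀ i < n, A (f i) (f (i+1))

theorem hasPathN_iff_pathFun {A : V → V → Prop} {u v : V} {n : ℕ} :
    HasPathN A u v n ↔ ∃ f : ℕ → V, PathFun A u v n f := by
  constructor
  · rintro ⟨f, hinj, h0, hl, harc⟩
    refine ⟨fun i => f ⟨min i n, by omega⟩, ?_, ?_, ?_, ?_⟩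
    · intro i hi j hj hij
      have := hinj hij
      simpa [Fin.ext_iff, Nat.min_eq_left hi, Nat.min_eq_left hj] using this
    · have : (0 : Fin (n+1)) = ⟨min 0 n, by omega⟩ := by rw [Fin.ext_iff]; simp
      show f _ = u
      rw [← this]; exact h0
    · have : (Fin.last n) = ⟨min n n, by omega⟩ := by rw [Fin.ext_iff]; simp [Fin.last]
      show f _ = v
      rw [← this]; exact hl
    · intro i hi
      have := harc ⟨i, hi⟩
      have e1 : (⟨i, hi⟩ : Fin n).castSucc = ⟨min i n, by omega⟩ := by
        rw [Fin.ext_iff]; simp; omega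
      have e2 : (⟨i, hi⟩ : Fin n).succ = ⟨min (i+1) n, by omega⟩ := by
        simp [Fin.ext_iff]; omega
      rwa [e1, e2] at this
  · rintro ⟨f, hinj, h0, hl, harc⟩
    refine ⟨fun i => f i.val, ?_, ?_, ?_, ?_⟩
    · intro i j hij
      exact Fin.ext (hinj i.val (by omega) j.val (by omega) hij)
    · exact h0
    · exact hl
    · intro i
      simpa using harc i.val i.isLt

theorem pathFun_refl (A : V → V → Prop) (u : V) : PathFun A u u 0 (fun _ => u) :=
  ⟨fun i hi j hj _ => by omega, rfl, rfl, fun i hi => by omega⟩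

theorem hasPathN_refl (A : V → V → Prop) (u : V) : HasPathN A u u 0 :=
  hasPathN_iff_pathFun.2 ⟨_, pathFun_refl A u⟩

/-- subpath of a path -/
theorem PathFun.sub {A : V → V → Prop} {u v : V} {n : ℕ} {f : ℕ → V}
    (h : PathFun A u v n f) {i j : ℕ} (hij : i ≤ j) (hj : j ≤ n) :
    PathFun A (f i) (f j) (j - i) (fun t => f (i + t)) := by
  obtain ⟨hinj, h0, hl, harc⟩ := h
  refine ⟨?_, by simp, ?_, ?_⟩
  · intro a ha b hb hab
    have := hinj (i+a) (by omega) (i+b) (by omega) hab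
    omega
  · simp only []
    congr 1; omega
  · intro t ht
    have := harc (i + t) (by omega)
    simpa [Nat.add_assoc] using this

theorem ddist_le_path {A : V → V → Prop} {u v : V} {m : ℕ} (h : HasPathN A u v m) :
    ddist A u v ≤ (m : ℕ∞) :=
  sInf_le ⟨m, rfl, h⟩

theorem ddist_min {A : V → V → Prop} {u v : V} (h : Reaches A u v) :
    ∃ m : ℕ, ddist A u v = (m : ℕ∞) ∧ HasPathN A u v m := by
  classical
  set T : Set ℕ := {m | HasPathN A u v m} with hT
  have hTne : T.Nonempty := h
  have hmem := Nat.sInf_mem hTne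
  refine ⟨sInf T, le_antisymm (ddist_le_path hmem) ?_, hmem⟩
  apply le_sInf
  rintro b ⟨m, rfl, hm⟩
  exact_mod_cast Nat.sInf_le hm

theorem exists_path_of_ddist_le {A : V → V → Prop} {u v : V} {n : ℕ}
    (h : ddist A u v ≤ (n : ℕ∞)) : ∃ m ≤ n, HasPathN A u v m := by
  by_cases hr : Reaches A u v
  · obtain ⟨m, hm, hp⟩ := ddist_min hr
    rw [hm] at h
    exact ⟨m, by exact_mod_cast h, hp⟩
  · exfalso
    have : {n : ℕ∞ | ∃ m : ℕ, n = (m : ℕ∞) ∧ HasPathN A u v m} = ∅ := by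
      ext x; simp only [Set.mem_setOf_eq, Set.mem_empty_iff_false, iff_false]
      rintro ⟨m, rfl, hm⟩; exact hr ⟨m, hm⟩
    rw [ddist, this, sInf_empty] at h
    simp at h

/-- extend a path by one arc, possibly shortening -/
theorem path_step {A : V → V → Prop} {u p d : V} {n : ℕ}
    (h : HasPathN A u p n) (ha : A p d) : ∃ t ≤ n + 1, HasPathN A u d t := by
  rw [hasPathN_iff_pathFun] at h
  obtain ⟨f, hinj, h0, hl, harc⟩ := h
  by_cases hd : ∃ i ≤ n, f i = d
  · obtain ⟨i, hi, hfi⟩ := hd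
    refine ⟨i, by omega, hasPathN_iff_pathFun.2 ⟨fun t => f (0 + t), ?_⟩⟩
    have := PathFun.sub ⟨hinj, h0, hl, harc⟩ (Nat.zero_le i) hi
    rwa [h0, hfi, Nat.sub_zero] at this
  · push_neg at hd
    refine ⟨n+1, le_refl _, hasPathN_iff_pathFun.2
      ⟨fun i => if i ≤ n then f i else d, ?_, ?_, ?_, ?_⟩⟩
    · intro i hi j hj hij
      by_cases h1 : i ≤ n <;> by_cases h2 : j ≤ n <;> simp [h1, h2] at hij
      · exact hinj i h1 j h2 hij
      · exact absurd hij (hd i h1)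
      · exact absurd hij.symm (hd j h2)
      · omega
    · simp [h0]
    · simp
    · intro i hi
      rcases Nat.lt_or_ge i n with h1 | h1
      · simpa [show i ≤ n by omega, show i + 1 ≤ n by omega] using harc i h1
      · have : i = n := by omega
        subst this
        simpa [hl] using ha

theorem ddist_step {A : V → V → Prop} {u p d : V} {q : ℕ}
    (h : ddist A u p ≤ (q : ℕ∞)) (ha : A p d) : ddist A u d ≤ ((q + 1 : ℕ) : ℕ∞) := by
  obtain ⟨m, hm, hp⟩ := exists_path_of_ddist_le h
  obtain ⟨t, ht, hp'⟩ := path_step hp ha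
  calc ddist A u d ≤ (t : ℕ∞) := ddist_le_path hp'
    _ ≤ ((q+1 : ℕ) : ℕ∞) := by exact_mod_cast by omega

theorem ddist_trans_path {A : V → V → Prop} {a b d : V} {e : ℕ}
    (h : HasPathN A b d e) : ddist A a d ≤ ddist A a b + (e : ℕ∞) := by
  rw [hasPathN_iff_pathFun] at h
  obtain ⟨f, hinj, h0, hl, harc⟩ := h
  have key : ∀ j ≤ e, ddist A a (f j) ≤ ddist A a b + (j : ℕ∞) := by
    intro j
    induction j with
    | zero => intro _; simp [h0]
    | succ j ih =>
      intro hj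
      have hih := ih (by omega)
      rcases eq_or_ne (ddist A a b) ⊤ with htop | htop
      · simp [htop]
      · obtain ⟨c, hc⟩ := WithTop.ne_top_iff_exists.1 htop
        rw [← hc] at hih ⊢
        have : ddist A a (f j) ≤ ((c + j : ℕ) : ℕ∞) := by
          refine le_trans hih ?_; push_cast; rfl
        have h2 := ddist_step this (harc j (by omega))
        refine le_trans h2 ?_
        push_cast [add_assoc]
        exact le_rfl
  have := key e le_rfl
  rwa [hl] at this

theorem reaches_refl (A : V → V → Prop) (u : V) : Reaches A u u := ⟨0, hasPathN_refl A u⟩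

theorem reaches_trans {A : V → V → Prop} {a b d : V}
    (h1 : Reaches A a b) (h2 : Reaches A b d) : Reaches A a d := by
  obtain ⟨n, hn⟩ := h1
  obtain ⟨e, he⟩ := h2
  have h3 : ddist A a d ≤ (n : ℕ∞) + (e : ℕ∞) :=
    le_trans (ddist_trans_path he) (add_le_add_left (ddist_le_path hn) _)
  have : ddist A a d ≤ ((n + e : ℕ) : ℕ∞) := by push_cast; exact h3
  obtain ⟨m, _, hp⟩ := exists_path_of_ddist_le this
  exact ⟨m, hp⟩


theorem hasPathN_single {A : V → V → Prop} {a b : V} (h : A a b) (hne : a ≠ b) :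
    HasPathN A a b 1 := by
  refine hasPathN_iff_pathFun.2 ⟨fun i => if i = 0 then a else b, ?_, by simp, by simp, ?_⟩
  · intro i hi j hj hij
    interval_cases i <;> interval_cases j <;> simp_all
  · intro i hi
    interval_cases i; simpa using h

theorem reaches_arc {A : V → V → Prop} {a b : V} (h : A a b) : Reaches A a b := by
  by_cases hne : a = b
  · exact hne ▸ reaches_refl A a
  · exact ⟨1, hasPathN_single h hne⟩

theorem reach_all [Fintype V] (A : V → V → Prop) (C : Set V)
    (hC : IsInitialStrongComponent A C)
    (huniq : ∀ S : Set V, IsInitialStrongComponent A S → S = C)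
    (v : V) (hv : v ∈ C) : ∀ u : V, Reaches A v u := by
  classical
  intro u
  set R : Finset V := Finset.univ.filter (fun z => Reaches A z u) with hR
  have huR : u ∈ R := by simp [hR, reaches_refl]
  obtain ⟨w, hwR, hwmin⟩ := R.exists_min_image
    (fun w => (Finset.univ.filter (fun z => Reaches A z w)).card) ⟨u, huR⟩
  have hmin : ∀ x : V, Reaches A x w → Reaches A w x := by
    intro x hx
    by_contra hwx
    have hxR : x ∈ R := by
      simp only [hR, Finset.mem_filter, Finset.mem_univ, true_and] at hwR ⊢
      exact reaches_trans hx hwR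
    have hsub : Finset.univ.filter (fun z => Reaches A z x) ⊂
        Finset.univ.filter (fun z => Reaches A z w) := by
      refine Finset.ssubset_iff_of_subset ?_ |>.2 ?_
      · intro z hz
        simp only [Finset.mem_filter, Finset.mem_univ, true_and] at hz ⊢
        exact reaches_trans hz hx
      · exact ⟨w, by simp [reaches_refl], by simpa using hwx⟩
    have := hwmin x hxR
    have := Finset.card_lt_card hsub
    omega
  set S : Set V := {z | Reaches A z w ∧ Reaches A w z} with hS
  have hSinit : IsInitialStrongComponent A S := by
    refine ⟨⟨w, rfl⟩, ?_⟩
    rintro a b haS hbS hab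
    rcases eq_or_ne a b with rfl | hne
    · exact haS hbS
    · have haw : Reaches A a w := reaches_trans (reaches_arc hab) hbS.1
      exact haS ⟨haw, hmin a haw⟩
  have hSC : S = C := huniq S hSinit
  have hwS : w ∈ S := ⟨reaches_refl A w, reaches_refl A w⟩
  have hwC : w ∈ C := hSC ▸ hwS
  obtain ⟨c, hc⟩ := hC.1
  rw [hc] at hv hwC
  have hvw : Reaches A v w := reaches_trans hv.1 hwC.2
  have hwu : Reaches A w u := by
    simp only [hR, Finset.mem_filter, Finset.mem_univ, true_and] at hwR
    exact hwR
  exact reaches_trans hvw hwu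


/-- index function: descent path [a, s, s+1, …, k, 0, 1, …, s-2] -/
def gdesc (k a s : ℕ) : ℕ → ℕ :=
  fun i => if i = 0 then a else if i ≤ 1+(k-s) then s+i-1 else i-(k-s)-2

/-- index function: [k+2, 0, 1, …, k-1] -/
def gbase (k : ℕ) : ℕ → ℕ := fun i => if i = 0 then k+2 else i-1

/-- index function: [k+1, k+2, 0, 1, …, k-2] -/
def gbase2 (k : ℕ) : ℕ → ℕ := fun i => if i ≤ 1 then k+1+i else i-2

/-- index function: [k+1, k+2, 4, 5, …, k, 0] (then `y` appended) -/
def gy (k : ℕ) : ℕ → ℕ :=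
  fun i => if i ≤ 1 then k+1+i else if i ≤ k-2 then i+2 else 0

section arcs
variable {A : V → V → Prop} {k : ℕ} {X : ℕ → V}

theorem pathFun_comp (hP : PathFun A (X 0) (X (k+2)) (k+2) X) {n : ℕ} (g : ℕ → ℕ)
    (hg : ∀ i ≤ n, g i ≤ k+2)
    (hginj : ∀ i ≤ n, ∀ j ≤ n, g i = g j → i = j)
    (harc : ∀ i < n, A (X (g i)) (X (g (i+1)))) :
    HasPathN A (X (g 0)) (X (g n)) n := by
  refine hasPathN_iff_pathFun.2 ⟨fun i => X (g i), ?_, rfl, rfl, harc⟩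
  intro i hi j hj hij
  exact hginj i hi j hj (hP.1 (g i) (hg i hi) (g j) (hg j hj) hij)

theorem hXsub (hP : PathFun A (X 0) (X (k+2)) (k+2) X) :
    ∀ i j, i ≤ j → j ≤ k+2 → HasPathN A (X i) (X j) (j - i) := by
  intro i j h1 h2
  exact hasPathN_iff_pathFun.2 ⟨_, hP.sub h1 h2⟩

variable (hk : 3 ≤ k) (hqt : KQuasiTrans A k)
  (hP : PathFun A (X 0) (X (k+2)) (k+2) X)
  (hshort : ∀ i j, i+2 ≤ j → j ≤ k+2 → ¬ A (X i) (X j))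

include hk hqt hP hshort

set_option linter.unusedSectionVars false

theorem arc_k0 : A (X k) (X 0) := by
  have hp : HasPathN A (X 0) (X k) k := by
    have := hXsub hP 0 k (by omega) (by omega)
    simpa using this
  rcases hqt _ _ hp with h | h
  · exact absurd h (hshort 0 k (by omega) (by omega))
  · exact h

theorem arc_k11 : A (X (k+1)) (X 1) := by
  have hp : HasPathN A (X 1) (X (k+1)) k := by
    have := hXsub hP 1 (k+1) (by omega) (by omega)
    simpa [show k+1-1 = k from by omega] using this
  rcases hqt _ _ hp with h | h
  · exact absurd h (hshort 1 (k+1) (by omega) (by omega))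
  · exact h

theorem arc_k22 : A (X (k+2)) (X 2) := by
  have hp : HasPathN A (X 2) (X (k+2)) k := by
    have := hXsub hP 2 (k+2) (by omega) (by omega)
    simpa [show k+2-2 = k from by omega] using this
  rcases hqt _ _ hp with h | h
  · exact absurd h (hshort 2 (k+2) (by omega) (by omega))
  · exact h

theorem arc_desc {a s : ℕ} (ha1 : k+1 ≤ a) (ha2 : a ≤ k+2) (hs1 : 2 ≤ s) (hs2 : s ≤ k-1)
    (harc : A (X a) (X s)) : A (X a) (X (s-2)) := by
  have hfwd := hP.2.2.2
  have hk0 := arc_k0 hk hqt hP hshort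
  have hpath : HasPathN A (X (gdesc k a s 0)) (X (gdesc k a s k)) k := by
    refine pathFun_comp hP (gdesc k a s) ?_ ?_ ?_
    · intro i hi; simp only [gdesc]; split_ifs <;> first | exact ‹False›.elim | omega
    · intro i hi j hj hij; simp only [gdesc] at hij; split_ifs at hij <;> first | exact ‹False›.elim | omega
    · intro i hi
      rcases eq_or_ne i 0 with rfl | h0
      · have e1 : gdesc k a s 0 = a := by simp [gdesc]
        have e2 : gdesc k a s 1 = s := by simp only [gdesc]; split_ifs <;> first | exact ‹False›.elim | omega
        rw [e1, e2]; exact harc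
      · rcases Nat.lt_or_ge i (1+(k-s)) with h1 | h1
        · have e1 : gdesc k a s i = s+i-1 := by simp only [gdesc]; split_ifs <;> first | exact ‹False›.elim | omega
          have e2 : gdesc k a s (i+1) = s+i := by simp only [gdesc]; split_ifs <;> first | exact ‹False›.elim | omega
          rw [e1, e2]
          have := hfwd (s+i-1) (by omega)
          rwa [show s+i-1+1 = s+i from by omega] at this
        · rcases eq_or_ne i (1+(k-s)) with rfl | h2
          · have e1 : gdesc k a s (1+(k-s)) = k := by simp only [gdesc]; split_ifs <;> first | exact ‹False›.elim | omega
            have e2 : gdesc k a s (1+(k-s)+1) = 0 := by simp only [gdesc]; split_ifs <;> first | exact ‹False›.elim | omega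
            rw [e1, e2]; exact hk0
          · have e1 : gdesc k a s i = i-(k-s)-2 := by simp only [gdesc]; split_ifs <;> first | exact ‹False›.elim | omega
            have e2 : gdesc k a s (i+1) = i-(k-s)-1 := by simp only [gdesc]; split_ifs <;> first | exact ‹False›.elim | omega
            rw [e1, e2]
            have := hfwd (i-(k-s)-2) (by omega)
            rwa [show i-(k-s)-2+1 = i-(k-s)-1 from by omega] at this
  have e0 : gdesc k a s 0 = a := by simp [gdesc]
  have ek : gdesc k a s k = s-2 := by simp only [gdesc]; split_ifs <;> first | exact ‹False›.elim | omega
  rw [e0, ek] at hpath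
  rcases hqt _ _ hpath with h | h
  · exact h
  · exact absurd h (hshort (s-2) a (by omega) (by omega))

theorem arc_k20 : A (X (k+2)) (X 0) := by
  have := arc_desc hk hqt hP hshort (a := k+2) (s := 2) (by omega) (by omega) (by omega)
    (by omega) (arc_k22 hk hqt hP hshort)
  simpa using this

theorem arc_ubase : A (X (k+2)) (X (k-1)) := by
  have hfwd := hP.2.2.2
  have hpath : HasPathN A (X (gbase k 0)) (X (gbase k k)) k := by
    refine pathFun_comp hP (gbase k) ?_ ?_ ?_
    · intro i hi; simp only [gbase]; split_ifs <;> first | exact ‹False›.elim | omega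
    · intro i hi j hj hij; simp only [gbase] at hij; split_ifs at hij <;> first | exact ‹False›.elim | omega
    · intro i hi
      rcases eq_or_ne i 0 with rfl | h0
      · have e1 : gbase k 0 = k+2 := by simp [gbase]
        have e2 : gbase k 1 = 0 := by simp [gbase]
        rw [e1, e2]; exact arc_k20 hk hqt hP hshort
      · have e1 : gbase k i = i-1 := by simp only [gbase]; split_ifs <;> first | exact ‹False›.elim | omega
        have e2 : gbase k (i+1) = i := by simp only [gbase]; split_ifs <;> first | exact ‹False›.elim | omega
        rw [e1, e2]
        have := hfwd (i-1) (by omega)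
        rwa [show i-1+1 = i from by omega] at this
  have e0 : gbase k 0 = k+2 := by simp [gbase]
  have ek : gbase k k = k-1 := by simp only [gbase]; split_ifs <;> first | exact ‹False›.elim | omega
  rw [e0, ek] at hpath
  rcases hqt _ _ hpath with h | h
  · exact h
  · exact absurd h (hshort (k-1) (k+2) (by omega) (by omega))

theorem arc_evens : ∀ j, 2*j ≤ k-1 → A (X (k+2)) (X (k-1-2*j)) := by
  intro j
  induction j with
  | zero => intro _; simpa using arc_ubase hk hqt hP hshort
  | succ j ih =>
    intro hj
    have hs : A (X (k+2)) (X (k-1-2*j)) := ih (by omega)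
    have := arc_desc hk hqt hP hshort (a := k+2) (s := k-1-2*j)
      (by omega) (by omega) (by omega) (by omega) hs
    rwa [show k-1-2*j-2 = k-1-2*(j+1) from by omega] at this

theorem arc_wbase : A (X (k+1)) (X (k-2)) := by
  have hfwd := hP.2.2.2
  have hpath : HasPathN A (X (gbase2 k 0)) (X (gbase2 k k)) k := by
    refine pathFun_comp hP (gbase2 k) ?_ ?_ ?_
    · intro i hi; simp only [gbase2]; split_ifs <;> first | exact ‹False›.elim | omega
    · intro i hi j hj hij; simp only [gbase2] at hij; split_ifs at hij <;> first | exact ‹False›.elim | omega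
    · intro i hi
      rcases eq_or_ne i 0 with rfl | h0
      · have e1 : gbase2 k 0 = k+1 := by simp [gbase2]
        have e2 : gbase2 k 1 = k+2 := by simp [gbase2]
        rw [e1, e2]
        have := hfwd (k+1) (by omega)
        rwa [show k+1+1 = k+2 from by omega] at this
      · rcases eq_or_ne i 1 with rfl | h1
        · have e1 : gbase2 k 1 = k+2 := by simp [gbase2]
          have e2 : gbase2 k 2 = 0 := by simp only [gbase2]; split_ifs <;> first | exact ‹False›.elim | omega
          rw [e1, e2]; exact arc_k20 hk hqt hP hshort
        · have e1 : gbase2 k i = i-2 := by simp only [gbase2]; split_ifs <;> first | exact ‹False›.elim | omega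
          have e2 : gbase2 k (i+1) = i-1 := by simp only [gbase2]; split_ifs <;> first | exact ‹False›.elim | omega
          rw [e1, e2]
          have := hfwd (i-2) (by omega)
          rwa [show i-2+1 = i-1 from by omega] at this
  have e0 : gbase2 k 0 = k+1 := by simp [gbase2]
  have ek : gbase2 k k = k-2 := by simp only [gbase2]; split_ifs <;> first | exact ‹False›.elim | omega
  rw [e0, ek] at hpath
  rcases hqt _ _ hpath with h | h
  · exact h
  · exact absurd h (hshort (k-2) (k+1) (by omega) (by omega))

theorem arc_odds : ∀ j, 2*j ≤ k-3 → A (X (k+1)) (X (k-2-2*j)) := by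
  intro j
  induction j with
  | zero => intro _; simpa using arc_wbase hk hqt hP hshort
  | succ j ih =>
    intro hj
    have hs : A (X (k+1)) (X (k-2-2*j)) := ih (by omega)
    have := arc_desc hk hqt hP hshort (a := k+1) (s := k-2-2*j)
      (by omega) (by omega) (by omega) (by omega) hs
    rwa [show k-2-2*j-2 = k-2-2*(j+1) from by omega] at this

theorem arc_y (hko : Odd k) (y : V) (hy0 : A (X 0) y) (hyne : X 0 ≠ y)
    (hyfar : ∀ j, 4 ≤ j → j ≤ k+2 → X j ≠ y) :
    A (X (k+1)) y ∨ A y (X (k+1)) := by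
  have hfwd := hP.2.2.2
  have hk0 := arc_k0 hk hqt hP hshort
  have hk20 := arc_k20 hk hqt hP hshort
  have hkodd : k % 2 = 1 := Nat.odd_iff.1 hko
  have hgyval : ∀ i, i ≤ k-1 → gy k i = 0 ∨ (4 ≤ gy k i ∧ gy k i ≤ k+2) := by
    intro i hi; simp only [gy]; split_ifs <;> first | exact ‹False›.elim | omega
  have hpf : PathFun A (X (k+1)) y k (fun i => if i = k then y else X (gy k i)) := by
    refine ⟨?_, ?_, ?_, ?_⟩
    · intro i hi j hj hij
      have hij2 : (if i = k then y else X (gy k i)) = (if j = k then y else X (gy k j)) := hij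
      by_cases hik : i = k <;> by_cases hjk : j = k
      · omega
      · rw [if_pos hik, if_neg hjk] at hij2
        rcases hgyval j (by omega) with h | h
        · rw [h] at hij2; exact absurd hij2.symm hyne
        · exact absurd hij2.symm (hyfar _ h.1 h.2)
      · rw [if_neg hik, if_pos hjk] at hij2
        rcases hgyval i (by omega) with h | h
        · rw [h] at hij2; exact absurd hij2 hyne
        · exact absurd hij2 (hyfar _ h.1 h.2)
      · rw [if_neg hik, if_neg hjk] at hij2
        have hb1 : gy k i ≤ k+2 := by
          simp only [gy]; split_ifs <;> first | exact ‹False›.elim | omega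
        have hb2 : gy k j ≤ k+2 := by
          simp only [gy]; split_ifs <;> first | exact ‹False›.elim | omega
        have := hP.1 _ hb1 _ hb2 hij2
        simp only [gy] at this; split_ifs at this <;> first | exact ‹False›.elim | omega
    · show (if (0:ℕ) = k then y else X (gy k 0)) = X (k+1)
      rw [if_neg (show (0:ℕ) ≠ k from by omega)]
      have : gy k 0 = k+1 := by simp [gy]
      rw [this]
    · show (if k = k then y else X (gy k k)) = y
      rw [if_pos rfl]
    · intro i hi
      show A (if i = k then y else X (gy k i)) (if i+1 = k then y else X (gy k (i+1)))
      rw [if_neg (show i ≠ k from by omega)]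
      by_cases hl : i+1 = k
      · rw [if_pos hl]
        have e1 : gy k i = 0 := by
          simp only [gy]; split_ifs <;> first | exact ‹False›.elim | omega
        rw [e1]; exact hy0
      · rw [if_neg hl]
        rcases eq_or_ne i 0 with rfl | h0
        · have e1 : gy k 0 = k+1 := by simp [gy]
          have e2 : gy k 1 = k+2 := by simp [gy]
          rw [e1, e2]
          have := hfwd (k+1) (by omega)
          rwa [show k+1+1 = k+2 from by omega] at this
        · rcases eq_or_ne i 1 with rfl | h1
          · have e1 : gy k 1 = k+2 := by simp [gy]
            rw [e1]
            rcases Nat.lt_or_ge k 5 with hk5 | hk5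
            · have hk3 : k = 3 := by omega
              have e2 : gy k 2 = 0 := by
                simp only [gy]; split_ifs <;> first | exact ‹False›.elim | omega
              rw [e2]; exact hk20
            · have e2 : gy k 2 = 4 := by
                simp only [gy]; split_ifs <;> first | exact ‹False›.elim | omega
              rw [e2]
              have := arc_evens hk hqt hP hshort ((k-5)/2) (by omega)
              rwa [show k-1-2*((k-5)/2) = 4 from by omega] at this
          · rcases eq_or_ne i (k-2) with rfl | h3
            · have e1 : gy k (k-2) = k := by
                simp only [gy]; split_ifs <;> first | exact ‹False›.elim | omega
              have e2 : gy k (k-2+1) = 0 := by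
                simp only [gy]; split_ifs <;> first | exact ‹False›.elim | omega
              rw [e1, e2]; exact hk0
            · have e1 : gy k i = i+2 := by
                simp only [gy]; split_ifs <;> first | exact ‹False›.elim | omega
              have e2 : gy k (i+1) = i+3 := by
                simp only [gy]; split_ifs <;> first | exact ‹False›.elim | omega
              rw [e1, e2]
              have := hfwd (i+2) (by omega)
              rwa [show i+2+1 = i+3 from by omega] at this
  exact hqt _ _ (hasPathN_iff_pathFun.2 ⟨_, hpf⟩)

end arcs


/-- odd `k ≥ 3`, unique initial strong component `C`; any vertex of `C`
whose out-degree in `C` exceeds `Δ⁺_C − (k−1)/2` is a `(k+1)`-king of `D`. -/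
theorem kqt_odd_degree_king
    [Fintype V] (A : V → V → Prop) (hloop : ∀ v : V, ¬ A v v)
    (k : ℕ) (hk : 3 ≤ k) (hko : Odd k) (hqt : KQuasiTrans A k)
    (C : Set V) (hC : IsInitialStrongComponent A C)
    (huniq : ∀ S : Set V, IsInitialStrongComponent A S → S = C)
    (v : V) (hv : v ∈ C)
    (hub : outDegIn A C v ≤ maxOutDegIn A C)
    (hlb : (maxOutDegIn A C : ℤ) - ((k - 1) / 2 : ℕ) < (outDegIn A C v : ℤ)) :
    IsRKing A (k + 1) v := by
  classical
  have hkodd : k % 2 = 1 := Nat.odd_iff.1 hko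
  intro u0
  by_contra hcon
  have hreach : Reaches A v u0 := reach_all A C hC huniq v hv u0
  obtain ⟨M, hMeq, hMpath⟩ := ddist_min hreach
  have hM : k+2 ≤ M := by
    by_contra hMlt
    push_neg at hMlt
    exact hcon (le_trans (le_of_eq hMeq) (by exact_mod_cast by omega))
  obtain ⟨fM, hfM⟩ := hasPathN_iff_pathFun.1 hMpath
  have hpre : HasPathN A v (fM (k+2)) (k+2) := by
    have h := hfM.sub (i := 0) (j := k+2) (by omega) (by omega)
    rw [hfM.2.1] at h
    have h2 := hasPathN_iff_pathFun.2 ⟨_, h⟩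
    simpa using h2
  have hsuf : HasPathN A (fM (k+2)) u0 (M-(k+2)) := by
    have h := hfM.sub (i := k+2) (j := M) hM (le_refl _)
    rw [hfM.2.2.1] at h
    exact hasPathN_iff_pathFun.2 ⟨_, h⟩
  have hdx' : ddist A v (fM (k+2)) = ((k+2 : ℕ) : ℕ∞) := by
    refine le_antisymm (ddist_le_path hpre) ?_
    by_contra hlt
    push_neg at hlt
    obtain ⟨c, hceq, _⟩ := ddist_min ⟨_, hpre⟩
    rw [hceq] at hlt
    have hc' : c < k+2 := by exact_mod_cast hlt
    have hc : c ≤ k+1 := by omega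
    have htr := ddist_trans_path (a := v) hsuf
    rw [hMeq, hceq] at htr
    have htr2 : (M:ℕ∞) ≤ ((c + (M-(k+2)) : ℕ) : ℕ∞) := by
      refine le_trans htr ?_
      push_cast
      exact le_refl _
    have : M ≤ c + (M-(k+2)) := by exact_mod_cast htr2
    omega
  obtain ⟨m2, hm2eq, hm2path⟩ := ddist_min ⟨_, hpre⟩
  have hm2 : m2 = k+2 := by
    rw [hdx'] at hm2eq
    exact_mod_cast hm2eq.symm
  rw [hm2] at hm2path
  obtain ⟨X, hX⟩ := hasPathN_iff_pathFun.1 hm2path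
  have hv0 : X 0 = v := hX.2.1
  have hP : PathFun A (X 0) (X (k+2)) (k+2) X := ⟨hX.1, rfl, rfl, hX.2.2.2⟩
  have hfwd := hX.2.2.2
  -- distance along the path
  have hd : ∀ j, j ≤ k+2 → ddist A v (X j) = (j:ℕ∞) := by
    intro j hj
    have hle : ddist A v (X j) ≤ (j:ℕ∞) := by
      have h := hP.sub (i := 0) (j := j) (by omega) hj
      rw [hv0] at h
      have h2 := ddist_le_path (hasPathN_iff_pathFun.2 ⟨_, h⟩)
      simpa using h2
    obtain ⟨c, hceq, _⟩ := ddist_min (by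
      obtain ⟨m, _, hp⟩ := exists_path_of_ddist_le hle
      exact ⟨m, hp⟩)
    have hcj : c ≤ j := by rw [hceq] at hle; exact_mod_cast hle
    have hsuf2 : HasPathN A (X j) (X (k+2)) (k+2-j) := by
      have h := hP.sub (i := j) (j := k+2) hj (le_refl _)
      exact hasPathN_iff_pathFun.2 ⟨_, h⟩
    have htr := ddist_trans_path (a := v) hsuf2
    rw [hX.2.2.1] at htr
    rw [hdx', hceq] at htr
    have htr2 : ((k+2:ℕ):ℕ∞) ≤ ((c + (k+2-j) : ℕ) : ℕ∞) := by
      refine le_trans htr ?_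
      push_cast
      exact le_refl _
    have hge : k+2 ≤ c + (k+2-j) := by exact_mod_cast htr2
    have : c = j := by omega
    rw [hceq, this]
  have hshort : ∀ i j, i+2 ≤ j → j ≤ k+2 → ¬ A (X i) (X j) := by
    intro i j h1 h2 harc
    have hdi := hd i (by omega)
    have hdj := hd j h2
    have hstep := ddist_step (le_of_eq hdi) harc
    rw [hdj] at hstep
    have : j ≤ i+1 := by exact_mod_cast hstep
    omega
  -- derived arcs
  have hk20 := arc_k20 hk hqt hP hshort
  -- membership in C
  obtain ⟨c0, hc0⟩ := hC.1
  have hvc : Reaches A v c0 ∧ Reaches A c0 v := by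
    have h := hv; rw [hc0] at h; exact h
  have hmem : ∀ z, Reaches A z v → Reaches A v z → z ∈ C := by
    intro z h1 h2
    rw [hc0]
    exact ⟨reaches_trans h1 hvc.1, reaches_trans hvc.2 h2⟩
  have hXC : ∀ j, j ≤ k+2 → X j ∈ C := by
    intro j hj
    refine hmem _ ?_ ?_
    · have h := hP.sub (i := j) (j := k+2) hj (le_refl _)
      have r1 : Reaches A (X j) (X (k+2)) := ⟨_, hasPathN_iff_pathFun.2 ⟨_, h⟩⟩
      have r2 : Reaches A (X (k+2)) v := hv0 ▸ reaches_arc hk20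
      exact reaches_trans r1 r2
    · have h := hP.sub (i := 0) (j := j) (by omega) hj
      rw [hv0] at h
      exact ⟨_, hasPathN_iff_pathFun.2 ⟨_, h⟩⟩
  -- N+(v) ⊆ N+(X (k+1))
  have hNsub : ∀ y, A v y → A (X (k+1)) y := by
    intro y hvy
    have hvy0 : A (X 0) y := by rw [hv0]; exact hvy
    have hyne : X 0 ≠ y := by
      rw [hv0]
      intro h
      rw [h] at hvy
      exact hloop y hvy
    have hyfar : ∀ j, 4 ≤ j → j ≤ k+2 → X j ≠ y := by
      intro j h4 hj2 he
      exact hshort 0 j (by omega) hj2 (he ▸ hvy0)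
    rcases arc_y hk hqt hP hshort hko y hvy0 hyne hyfar with h | h
    · exact h
    · exfalso
      have h1 : ddist A v y ≤ ((0+1:ℕ):ℕ∞) :=
        ddist_step (by simpa using ddist_le_path (hasPathN_refl A v)) hvy
      have h2 : ddist A v (X (k+1)) ≤ ((0+1+1:ℕ):ℕ∞) := ddist_step h1 h
      rw [hd (k+1) (by omega)] at h2
      have : k+1 ≤ 0+1+1 := by exact_mod_cast h2
      omega
  -- the sets
  have hNvNw : {z | z ∈ C ∧ A v z} ⊆ {z | z ∈ C ∧ A (X (k+1)) z} :=
    fun z hz => ⟨hz.1, hNsub z hz.2⟩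
  have hEsub : insert (X (k+2)) ((fun i => X (2*i+3)) '' {i | i < (k-3)/2})
      ⊆ {z | z ∈ C ∧ A (X (k+1)) z} := by
    intro z hz
    rcases Set.mem_insert_iff.1 hz with rfl | ⟨i, hi, rfl⟩
    · refine ⟨hXC _ (le_refl _), ?_⟩
      have := hfwd (k+1) (by omega)
      rwa [show k+1+1 = k+2 from by omega] at this
    · simp only [Set.mem_setOf_eq] at hi
      refine ⟨hXC _ (by omega), ?_⟩
      have := arc_odds hk hqt hP hshort ((k-5)/2 - i) (by omega)
      rwa [show k-2-2*((k-5)/2-i) = 2*i+3 from by omega] at this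
  have hdisj : Disjoint {z | z ∈ C ∧ A v z}
      (insert (X (k+2)) ((fun i => X (2*i+3)) '' {i | i < (k-3)/2})) := by
    rw [Set.disjoint_right]
    intro z hz hzv
    rcases Set.mem_insert_iff.1 hz with rfl | ⟨i, hi, rfl⟩
    · exact hshort 0 (k+2) (by omega) (le_refl _) (by rw [hv0]; exact hzv.2)
    · simp only [Set.mem_setOf_eq] at hi
      exact hshort 0 (2*i+3) (by omega) (by omega) (by rw [hv0]; exact hzv.2)
  have hEcard : (insert (X (k+2)) ((fun i => X (2*i+3)) '' {i | i < (k-3)/2})).ncard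
      = (k-1)/2 := by
    have hinj1 : Set.InjOn (fun i => X (2*i+3)) {i | i < (k-3)/2} := by
      intro a ha b hb hab
      simp only [Set.mem_setOf_eq] at ha hb
      have := hP.1 (2*a+3) (by omega) (2*b+3) (by omega) hab
      omega
    rw [Set.ncard_insert_of_notMem, Set.ncard_image_of_injOn hinj1]
    · have h1 : {i : ℕ | i < (k-3)/2} = Set.Iio ((k-3)/2) := rfl
      rw [h1]
      have h2 : (Set.Iio ((k-3)/2)).ncard = (k-3)/2 := by
        rw [Set.ncard_eq_toFinset_card']
        simp
      rw [h2]
      omega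
    · rintro ⟨i, hi, he⟩
      simp only [Set.mem_setOf_eq] at hi
      have := hP.1 (2*i+3) (by omega) (k+2) (le_refl _) he
      omega
  have hcard : ({z | z ∈ C ∧ A v z}).ncard + (k-1)/2
      ≤ ({z | z ∈ C ∧ A (X (k+1)) z}).ncard := by
    have h1 := Set.ncard_union_eq hdisj (Set.toFinite _) (Set.toFinite _)
    have h2 := Set.ncard_le_ncard (Set.union_subset hNvNw hEsub) (Set.toFinite _)
    omega
  have hwle : outDegIn A C (X (k+1)) ≤ maxOutDegIn A C :=
    le_csSup ((outDegIn A C '' C).toFinite.bddAbove) ⟨X (k+1), hXC (k+1) (by omega), rfl⟩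
  have h1 : outDegIn A C v = ({z | z ∈ C ∧ A v z}).ncard := rfl
  have h2 : outDegIn A C (X (k+1)) = ({z | z ∈ C ∧ A (X (k+1)) z}).ncard := rfl
  rw [h1] at hlb hub
  rw [h2] at hwle
  omega
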